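/- Fix ε ∈ (0,1) and define f : ℝ → ℝ by f(x) = 1/x + (1−ε)²(x−1)² / (x(x² − (1−ε)²(x² − x + 1))). Then for every real x ≥ 5 the denominator x(x² − (1−ε)²(x² − x + 1)) is positive and f′(x) < 0; consequently f is strictly decreasing on [5, ∞). -/
import Mathlib


open Filter Topology

noncomputable section

namespace NVMPaper

/-- Remark in Section 4.1: for fixed `ε ∈ (0,1)`, the function
`f(x) = 1/x + (1−ε)²(x−1)² / (x(x² − (1−ε)²(x² − x + 1)))` has positive denominator
and negative derivative for all `x ≥ 5`; consequently `f` is strictly decreasing on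
`[5, ∞)`. -/
theorem f_strictAnti (ε : ℝ) (hε : ε ∈ Set.Ioo (0 : ℝ) 1) :
    (∀ x : ℝ, 5 ≤ x →
      0 < x * (x ^ 2 - (1 - ε) ^ 2 * (x ^ 2 - x + 1)) ∧
        deriv (fun x : ℝ =>
          1 / x + (1 - ε) ^ 2 * (x - 1) ^ 2 /
            (x * (x ^ 2 - (1 - ε) ^ 2 * (x ^ 2 - x + 1)))) x < 0) ∧
    StrictAntiOn (fun x : ℝ =>
        1 / x + (1 - ε) ^ 2 * (x - 1) ^ 2 /
          (x * (x ^ 2 - (1 - ε) ^ 2 * (x ^ 2 - x + 1)))) (Set.Ici 5) := by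
  obtain ⟨hε0, hε1⟩ := hε
  set c : ℝ := (1 - ε) ^ 2 with hc
  have hc0 : 0 < c := by have : 0 < 1 - ε := by linarith
                         positivity
  have hc1 : c < 1 := by simp only [hc]; nlinarith
  set g : ℝ → ℝ := fun x => (1 - c) * x ^ 2 + c * x - c with hg
  have hgpos : ∀ y : ℝ, 1 < y → 0 < g y := by
    intro y hy; simp only [hg]; nlinarith
  have hDg : ∀ y : ℝ, y ^ 2 - c * (y ^ 2 - y + 1) = g y := by
    intro y; simp only [hg]; ring
  have heq : ∀ y : ℝ, 1 < y →
      1 / y + c * (y - 1) ^ 2 / (y * (y ^ 2 - c * (y ^ 2 - y + 1))) = (y - c) / g y := by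
    intro y hy
    have hy0 : y ≠ 0 := by linarith
    have hgne : g y ≠ 0 := (hgpos y hy).ne'
    have hD : y ^ 2 - c * (y ^ 2 - y + 1) ≠ 0 := by rw [hDg]; exact hgne
    rw [div_add_div _ _ hy0 (mul_ne_zero hy0 hD), div_eq_div_iff (mul_ne_zero hy0 (mul_ne_zero hy0 hD)) hgne]
    simp only [hg]; ring
  have hF : ∀ y : ℝ, 1 < y → HasDerivAt (fun x => (x - c) / g x)
      ((1 * g y - (y - c) * (2 * (1 - c) * y + c)) / (g y) ^ 2) y := by
    intro y hy
    have h1 : HasDerivAt (fun x : ℝ => x - c) 1 y := (hasDerivAt_id y).sub_const c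
    have h2 : HasDerivAt g (2 * (1 - c) * y + c) y := by
      have : HasDerivAt (fun x : ℝ => (1 - c) * x ^ 2 + c * x - c)
          ((1 - c) * (2 * y ^ 1) + c * 1) y :=
        (((hasDerivAt_pow 2 y).const_mul (1 - c)).add ((hasDerivAt_id y).const_mul c)).sub_const c
      simpa only [hg, pow_one, mul_one] using this.congr_deriv (by ring)
    exact h1.div h2 (hgpos y hy).ne'
  have hderiv : ∀ x : ℝ, 1 < x →
      deriv (fun x : ℝ =>
          1 / x + (1 - ε) ^ 2 * (x - 1) ^ 2 /
            (x * (x ^ 2 - (1 - ε) ^ 2 * (x ^ 2 - x + 1)))) x < 0 := by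
    intro x hx
    have hmem : Set.Ioi (1 : ℝ) ∈ 𝓝 x := Ioi_mem_nhds hx
    have hevq : (fun x : ℝ =>
          1 / x + (1 - ε) ^ 2 * (x - 1) ^ 2 /
            (x * (x ^ 2 - (1 - ε) ^ 2 * (x ^ 2 - x + 1))))
        =ᶠ[𝓝 x] fun x => (x - c) / g x := by
      filter_upwards [hmem] with y hy
      exact heq y hy
    rw [hevq.deriv_eq, (hF x hx).deriv]
    apply div_neg_of_neg_of_pos
    · have hx2 : 0 < x ^ 2 - 2 * c * x + c := by nlinarith [sq_nonneg (x - 1)]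
      simp only [hg]; nlinarith
    · exact pow_pos (hgpos x hx) 2
  have hDpos : ∀ x : ℝ, 5 ≤ x → 0 < x * (x ^ 2 - (1 - ε) ^ 2 * (x ^ 2 - x + 1)) := by
    intro x hx
    have hgx := hgpos x (by linarith)
    have : (0:ℝ) < x := by linarith
    have h2 : 0 < x ^ 2 - c * (x ^ 2 - x + 1) := by rw [hDg]; exact hgx
    exact mul_pos this h2
  refine ⟨fun x hx => ⟨hDpos x hx, hderiv x (by linarith)⟩, ?_⟩
  apply strictAntiOn_of_deriv_neg (convex_Ici 5)
  · apply ContinuousOn.add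
    · exact continuousOn_const.div continuousOn_id (fun x hx => by
        have : (5:ℝ) ≤ x := hx; intro h; simp [h] at this; linarith)
    · exact ContinuousOn.div (by fun_prop) (by fun_prop) (fun x hx => (hDpos x hx).ne')
  · intro x hx
    rw [interior_Ici] at hx
    exact hderiv x (by simp at hx; linarith)

end NVMPaper
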